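/- Let R be a commutative ring and F a covariant functor from the category of commutative R-algebras to the category of abelian groups. Let S′ and R′ be R-algebras which are noetherian domains, with fields of fractions K′ and L′ respectively. Let i : S′ → R′ be an injective flat homomorphism of R-algebras of finite type, and let j : K′ → L′ be the induced inclusion of fraction fields. Then for every localization R′′ of R′ (i.e. R′′ = M^{-1}R′ for a multiplicative subset M ⊆ R′ ∖ {0}), the induced map j_* : F(K′) → F(L′) carries S′-unramified elements to R′′-unramified elements; that is, j_*(F_{nr,S′}(K′)) ⊆ F_{nr,R′′}(L′). -/

import Mathlib

open CategoryTheory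

universe u

/-- A covariant functor from the category of commutative `R`-algebras to abelian groups. -/
structure AbGroupFunctor (R : Type u) [CommRing R] : Type (u + 1) where
  obj : (T : Type u) → [CommRing T] → [Algebra R T] → AddCommGrpCat.{u}
  map : {T T' : Type u} → [CommRing T] → [Algebra R T] → [CommRing T'] → [Algebra R T'] →
    (T →ₐ[R] T') → (obj T ⟶ obj T')
  map_id : ∀ (T : Type u) [CommRing T] [Algebra R T], map (AlgHom.id R T) = 𝟙 (obj T)
  map_comp : ∀ {T T' T'' : Type u} [CommRing T] [Algebra R T] [CommRing T'] [Algebra R T']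
    [CommRing T''] [Algebra R T''] (φ : T →ₐ[R] T') (ψ : T' →ₐ[R] T''),
    map (ψ.comp φ) = map φ ≫ map ψ

/-- The canonical `R`-algebra homomorphism from the localization of a domain `T` at a prime `p`
to the fraction field `Q` of `T`. -/
noncomputable def locAtPrimeToFractionField (R : Type u) [CommRing R]
    (T : Type u) [CommRing T] [IsDomain T] [Algebra R T]
    (Q : Type u) [Field Q] [Algebra T Q] [IsFractionRing T Q]
    [Algebra R Q] [IsScalarTower R T Q]
    (p : Ideal T) [p.IsPrime] : Localization.AtPrime p →ₐ[R] Q :=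
  IsLocalization.liftAlgHom (M := p.primeCompl) (S := Localization.AtPrime p)
    (f := IsScalarTower.toAlgHom R T Q)
    (fun y => by
      refine isUnit_iff_ne_zero.mpr fun h => y.2 ?_
      have h0 : (y : T) = 0 :=
        (IsFractionRing.to_map_eq_zero_iff (K := Q)).mp (by simpa using h)
      rw [h0]; exact p.zero_mem)

/-- The subgroup (here: subset) of `T`-unramified elements of `F(Q)`, where `Q` is the fraction
field of the noetherian domain `T`: the intersection, over all primes `p` of `T` of height one,
of the images of `F(T_p) → F(Q)`. -/
noncomputable def unramifiedSet (R : Type u) [CommRing R] (F : AbGroupFunctor R)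
    (T : Type u) [CommRing T] [IsDomain T] [Algebra R T]
    (Q : Type u) [Field Q] [Algebra T Q] [IsFractionRing T Q]
    [Algebra R Q] [IsScalarTower R T Q] : Set (F.obj Q) :=
  ⋂ (p : Ideal T) (hp : p.IsPrime),
    haveI : p.IsPrime := hp
    ⋂ (_ : ringKrullDim (Localization.AtPrime p) = 1),
      Set.range (F.map (locAtPrimeToFractionField R T Q p))

section AuxLemmas


open TensorProduct in
lemma flat_colon {A B : Type*} [CommRing A] [CommRing B] (f : A →+* B) (hf : RingHom.Flat f)
    (I : Ideal A) (hI : I.IsPrime) (a : A) (ha : a ∉ I) {b : B} (hb : f a * b ∈ I.map f) :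
    b ∈ I.map f := by
  letI : Algebra A B := f.toAlgebra
  haveI : Module.Flat A B := hf
  have halg : algebraMap A B = f := rfl
  set μ : (A ⧸ I) →ₗ[A] (A ⧸ I) := a • LinearMap.id with hμdef
  have hμinj : Function.Injective μ := by
    intro x y hxy
    obtain ⟨x, rfl⟩ := Ideal.Quotient.mk_surjective x
    obtain ⟨y, rfl⟩ := Ideal.Quotient.mk_surjective y
    have hxy' : Ideal.Quotient.mk I (a * x) = Ideal.Quotient.mk I (a * y) := by
      simpa [hμdef, Algebra.smul_def, Ideal.Quotient.algebraMap_eq, map_mul] using hxy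
    have : a * (x - y) ∈ I := by
      rw [mul_sub]
      rw [← sub_eq_zero, ← map_sub] at hxy'
      exact (Ideal.Quotient.eq_zero_iff_mem).mp hxy'
    have hxyI : x - y ∈ I := ((Ideal.IsPrime.mem_or_mem hI this).resolve_left ha)
    rw [← sub_eq_zero, ← map_sub, Ideal.Quotient.eq_zero_iff_mem]
    exact hxyI
  have hinj2 : Function.Injective (LinearMap.rTensor B μ) :=
    Module.Flat.rTensor_preserves_injective_linearMap (M := B) μ hμinj
  have hsmul : LinearMap.rTensor B μ = a • LinearMap.id := by
    apply TensorProduct.ext'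
    intro x y
    simp [hμdef, TensorProduct.smul_tmul']
  let e := TensorProduct.quotTensorEquivQuotSMul B I
  have hmem : f a * b ∈ (I • ⊤ : Submodule A B) := by
    rw [Ideal.smul_top_eq_map]
    exact hb
  have hsm : a • (Submodule.Quotient.mk b : B ⧸ (I • ⊤ : Submodule A B)) = 0 := by
    rw [← Submodule.Quotient.mk_smul, Submodule.Quotient.mk_eq_zero]
    exact hmem
  have hzero : (Submodule.Quotient.mk b : B ⧸ (I • ⊤ : Submodule A B)) = 0 := by
    set t := (Submodule.Quotient.mk b : B ⧸ (I • ⊤ : Submodule A B))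
    have h1 : a • e.symm t = 0 := by rw [← map_smul, hsm, map_zero]
    have h2 : LinearMap.rTensor B μ (e.symm t) = 0 := by
      rw [hsmul]; simpa using h1
    have h3 : e.symm t = 0 := hinj2 (by rw [h2, map_zero])
    have := congrArg e h3
    rwa [LinearEquiv.apply_symm_apply, map_zero] at this
  have : b ∈ (I • ⊤ : Submodule A B) := (Submodule.Quotient.mk_eq_zero _).mp hzero
  rwa [Ideal.smul_top_eq_map] at this

lemma exists_prime_strictly_between {A B : Type*} [CommRing A] [IsDomain A] [CommRing B]
    [IsDomain B] (f : A →+* B) (hinj : Function.Injective f) (hf : RingHom.Flat f)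
    (p' : Ideal B) (hp' : p'.IsPrime) (p₀ : Ideal A) (hp₀ : p₀.IsPrime) (hne : p₀ ≠ ⊥)
    (hlt : p₀ < p'.comap f) :
    ∃ q₀ : Ideal B, q₀.IsPrime ∧ ⊥ < q₀ ∧ q₀ < p' := by
  classical
  set T : Submonoid B :=
    { carrier := {x | ∃ a ∈ p₀.primeCompl, ∃ c ∈ p'.primeCompl, x = f a * c}
      one_mem' := ⟨1, p₀.primeCompl.one_mem, 1, p'.primeCompl.one_mem, by simp⟩
      mul_mem' := by
        rintro x y ⟨a, ha, c, hc, rfl⟩ ⟨a', ha', c', hc', rfl⟩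
        exact ⟨a * a', p₀.primeCompl.mul_mem ha ha', c * c', p'.primeCompl.mul_mem hc hc', by
          rw [map_mul]; ring⟩ } with hT
  have hdisj : Disjoint ((p₀.map f : Ideal B) : Set B) (T : Set B) := by
    rw [Set.disjoint_left]
    rintro x hxJ ⟨a, ha, c, hc, rfl⟩
    have h1 : c ∈ p₀.map f := flat_colon f hf p₀ hp₀ a ha hxJ
    have h2 : c ∈ p' := (Ideal.map_le_iff_le_comap.mpr hlt.le) h1
    exact hc h2
  obtain ⟨q₀, hq₀prime, hJq₀, hq₀T⟩ := Ideal.exists_le_prime_disjoint _ T hdisj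
  have hq₀le : q₀ ≤ p' := by
    intro x hx
    by_contra hxp'
    exact Set.disjoint_left.mp hq₀T hx ⟨1, p₀.primeCompl.one_mem, x, hxp', by simp⟩
  have hcomap : q₀.comap f = p₀ := by
    apply le_antisymm
    · intro a haq₀
      by_contra ha
      exact Set.disjoint_left.mp hq₀T haq₀ ⟨a, ha, 1, p'.primeCompl.one_mem, by simp⟩
    · intro a hap₀
      exact hJq₀ (Ideal.mem_map_of_mem f hap₀)
  have hne' : q₀ ≠ p' := by
    rintro rfl
    exact hlt.ne (hcomap.symm ▸ rfl)
  have hbot : (⊥ : Ideal B) < q₀ := by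
    rcases Submodule.ne_bot_iff _ |>.mp hne with ⟨a, hap₀, ha0⟩
    refine bot_lt_iff_ne_bot.mpr fun h => ?_
    have : f a ∈ q₀ := hJq₀ (Ideal.mem_map_of_mem f hap₀)
    rw [h, Ideal.mem_bot] at this
    exact ha0 (hinj (by rwa [map_zero]))
  exact ⟨q₀, hq₀prime, hbot, lt_of_le_of_ne hq₀le hne'⟩

universe v

lemma ltSeries_le_ringKrullDim (A : Type v) [CommRing A] (P : Ideal A) [P.IsPrime]
    (S : Type v) [CommRing S] [Algebra A S] [IsLocalization.AtPrime S P]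
    (c : LTSeries {p : Ideal A // p.IsPrime ∧ p ≤ P}) :
    (c.length : WithBot ℕ∞) ≤ ringKrullDim S := by
  let e := (IsLocalization.AtPrime.orderIsoOfPrime S P).symm
  let g : {p : Ideal A // p.IsPrime ∧ p ≤ P} → PrimeSpectrum S := fun u => ⟨(e u).1, (e u).2⟩
  have hg : StrictMono g := by
    intro u v huv
    rw [← PrimeSpectrum.asIdeal_lt_asIdeal]
    exact Subtype.coe_lt_coe.mpr (e.strictMono huv)
  have h := Order.LTSeries.length_le_krullDim (c.map g hg)
  simpa [ringKrullDim] using h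


end AuxLemmas

/-- Let `R` be a commutative ring and `F` a covariant functor from commutative
`R`-algebras to abelian groups. Let `S′` and `R′` be `R`-algebras which are noetherian domains
with fraction fields `K′` and `L′`. Let `i : S′ → R′` be an injective flat homomorphism of
`R`-algebras of finite type, and `j : K′ → L′` the induced inclusion of fraction fields. Then
for every localization `R′′` of `R′` at a multiplicative set `M ⊆ R′ ∖ {0}`, the induced map
`j_* : F(K′) → F(L′)` carries `S′`-unramified elements to `R′′`-unramified elements. -/
theorem unramified_maps_to_unramified
    (R : Type u) [CommRing R] (F : AbGroupFunctor R)
    (S' : Type u) [CommRing S'] [IsDomain S'] [IsNoetherianRing S'] [Algebra R S']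
    (R' : Type u) [CommRing R'] [IsDomain R'] [IsNoetherianRing R'] [Algebra R R']
    (K' : Type u) [Field K'] [Algebra S' K'] [IsFractionRing S' K']
    [Algebra R K'] [IsScalarTower R S' K']
    (L' : Type u) [Field L'] [Algebra R' L'] [IsFractionRing R' L']
    [Algebra R L'] [IsScalarTower R R' L']
    (i : S' →ₐ[R] R') (hinj : Function.Injective i)
    (hflat : RingHom.Flat (i : S' →+* R')) (hft : (i : S' →+* R').FiniteType)
    (j : K' →ₐ[R] L') (hj : ∀ s : S', j (algebraMap S' K' s) = algebraMap R' L' (i s))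
    (M : Submonoid R') (hM : (0 : R') ∉ M)
    (R'' : Type u) [CommRing R''] [IsDomain R''] [Algebra R' R''] [IsLocalization M R'']
    [Algebra R R''] [IsScalarTower R R' R'']
    [Algebra R'' L'] [IsScalarTower R' R'' L'] [IsScalarTower R R'' L'] [IsFractionRing R'' L'] :
    (F.map j) '' (unramifiedSet R F S' K') ⊆ unramifiedSet R F R'' L' := by
  rintro z ⟨x, hx, rfl⟩
  simp only [unramifiedSet, Set.mem_iInter] at hx ⊢
  intro q hq hdim
  haveI := hq
  -- the contracted primes
  set p' : Ideal R' := q.comap (algebraMap R' R'') with hp'def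
  haveI hp' : p'.IsPrime := Ideal.IsPrime.comap _
  haveI hlocq : IsLocalization.AtPrime (Localization.AtPrime q) p' :=
    IsLocalization.isLocalization_isLocalization_atPrime_isLocalization M
      (Localization.AtPrime q) q
  set p : Ideal S' := p'.comap (i : S' →+* R') with hpdef
  haveI hp : p.IsPrime := Ideal.IsPrime.comap _
  -- the algebra map from S' to the localization of R'' at q
  set f₀ : S' →ₐ[R] Localization.AtPrime q :=
    (IsScalarTower.toAlgHom R R'' (Localization.AtPrime q)).comp
      ((IsScalarTower.toAlgHom R R' R'').comp i) with hf₀def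
  have hf₀ : ∀ s : S',
      f₀ s = algebraMap R'' (Localization.AtPrime q) (algebraMap R' R'' (i s)) := fun s => rfl
  have hunit : ∀ s : S', s ∉ p → IsUnit (f₀ s) := by
    intro s hs
    have h1 : algebraMap R' R'' (i s) ∈ q.primeCompl := by
      intro hmem
      exact hs (by rwa [hpdef, Ideal.mem_comap, hp'def, Ideal.mem_comap])
    exact IsLocalization.map_units (Localization.AtPrime q) (⟨_, h1⟩ : q.primeCompl)
  -- a useful computation for the target composite
  have hloc : ∀ s : S',
      locAtPrimeToFractionField R R'' L' q
        (algebraMap R'' (Localization.AtPrime q) (algebraMap R' R'' (i s)))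
        = algebraMap R' L' (i s) := by
    intro s
    rw [locAtPrimeToFractionField, IsLocalization.liftAlgHom_apply, IsLocalization.lift_eq]
    simp only [AlgHom.toRingHom_eq_coe, RingHom.coe_coe, IsScalarTower.coe_toAlgHom']
    rw [← IsScalarTower.algebraMap_apply R' R'' L']
  by_cases hp0 : p = ⊥
  · -- the zero contraction case: `x` maps directly through `K' → (R'')_q`
    set ψ : K' →ₐ[R] Localization.AtPrime q :=
      IsLocalization.liftAlgHom (M := nonZeroDivisors S')
        (f := f₀) (fun y => hunit y (by
          rw [hp0, Ideal.mem_bot]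
          exact mem_nonZeroDivisors_iff_ne_zero.mp y.2)) with hψdef
    have hcomm : (locAtPrimeToFractionField R R'' L' q).comp ψ = j := by
      apply AlgHom.coe_ringHom_injective
      apply IsLocalization.ringHom_ext (nonZeroDivisors S')
      ext s
      simp only [RingHom.coe_comp, Function.comp_apply, AlgHom.toRingHom_eq_coe,
        RingHom.coe_coe, AlgHom.coe_comp]
      rw [hψdef]
      rw [show ((IsLocalization.liftAlgHom _ : K' →ₐ[R] Localization.AtPrime q))
            (algebraMap S' K' s) = f₀ s from IsLocalization.lift_eq _ s]
      rw [hf₀ s, hloc s, hj s]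
    refine ⟨F.map ψ x, ?_⟩
    have hFcomp : F.map j = F.map ψ ≫ F.map (locAtPrimeToFractionField R R'' L' q) := by
      rw [← F.map_comp, hcomm]
    rw [hFcomp]
    rfl
  · -- the nonzero contraction case
    -- first: the localization of S' at p has Krull dimension one
    have hdim1 : ringKrullDim (Localization.AtPrime p) = 1 := by
      have hge : (1 : WithBot ℕ∞) ≤ ringKrullDim (Localization.AtPrime p) := by
        have hchain : ((⟨⊥, Ideal.bot_prime, bot_le⟩ : {I : Ideal S' // I.IsPrime ∧ I ≤ p})) <
            ⟨p, hp, le_rfl⟩ := Subtype.mk_lt_mk.mpr (bot_lt_iff_ne_bot.mpr hp0)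
        let c : LTSeries {I : Ideal S' // I.IsPrime ∧ I ≤ p} :=
          (RelSeries.singleton _ ⟨⊥, Ideal.bot_prime, bot_le⟩).snoc ⟨p, hp, le_rfl⟩
            (by rw [RelSeries.last_singleton]; exact hchain)
        have := ltSeries_le_ringKrullDim S' p (Localization.AtPrime p) c
        simpa [c] using this
      have hle : ringKrullDim (Localization.AtPrime p) ≤ 1 := by
        rw [ringKrullDim, Order.krullDim]
        apply iSup_le
        intro c
        rcases le_or_gt c.length 1 with h | h
        · exact_mod_cast h
        · exfalso
          let e' := IsLocalization.AtPrime.orderIsoOfPrime (Localization.AtPrime p) p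
          have hc01 : c ⟨0, by omega⟩ < c ⟨1, by omega⟩ :=
            c.strictMono (Fin.mk_lt_mk.mpr (by omega))
          have hc12 : c ⟨1, by omega⟩ < c ⟨2, by omega⟩ :=
            c.strictMono (Fin.mk_lt_mk.mpr (by omega))
          set P₀ := e' ⟨(c ⟨0, by omega⟩).asIdeal, (c ⟨0, by omega⟩).isPrime⟩ with hP₀
          set P₁ := e' ⟨(c ⟨1, by omega⟩).asIdeal, (c ⟨1, by omega⟩).isPrime⟩ with hP₁
          set P₂ := e' ⟨(c ⟨2, by omega⟩).asIdeal, (c ⟨2, by omega⟩).isPrime⟩ with hP₂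
          have h01 : P₀ < P₁ := e'.strictMono (Subtype.mk_lt_mk.mpr hc01)
          have h12 : P₁ < P₂ := e'.strictMono (Subtype.mk_lt_mk.mpr hc12)
          have hP₁ne : P₁.1 ≠ ⊥ :=
            (lt_of_le_of_lt bot_le (Subtype.coe_lt_coe.mpr h01)).ne'
          have hP₁lt : P₁.1 < p'.comap (i : S' →+* R') :=
            lt_of_lt_of_le (Subtype.coe_lt_coe.mpr h12) P₂.2.2
          obtain ⟨q₀, hq₀, hq₀bot, hq₀lt⟩ :=
            exists_prime_strictly_between (i : S' →+* R') hinj hflat p' hp'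
              P₁.1 P₁.2.1 hP₁ne hP₁lt
          -- build a chain of length two below p' in R'
          have hl1 : ((⟨⊥, Ideal.bot_prime, bot_le⟩ : {I : Ideal R' // I.IsPrime ∧ I ≤ p'})) <
              ⟨q₀, hq₀, hq₀lt.le⟩ := Subtype.mk_lt_mk.mpr hq₀bot
          have hl2 : ((⟨q₀, hq₀, hq₀lt.le⟩ : {I : Ideal R' // I.IsPrime ∧ I ≤ p'})) <
              ⟨p', hp', le_rfl⟩ := Subtype.mk_lt_mk.mpr hq₀lt
          let c2 : LTSeries {I : Ideal R' // I.IsPrime ∧ I ≤ p'} :=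
            ((RelSeries.singleton _ ⟨⊥, Ideal.bot_prime, bot_le⟩).snoc ⟨q₀, hq₀, hq₀lt.le⟩
              (by rw [RelSeries.last_singleton]; exact hl1)).snoc ⟨p', hp', le_rfl⟩
              (by rw [RelSeries.last_snoc]; exact hl2)
          have h2 := ltSeries_le_ringKrullDim R' p' (Localization.AtPrime q) c2
          have hlen2 : c2.length = 2 := by simp [c2]
          rw [hlen2, hdim] at h2
          norm_num at h2
      exact le_antisymm hle hge
    -- use the unramifiedness of x at p
    obtain ⟨y, hy⟩ := hx p hp hdim1
    set φ : Localization.AtPrime p →ₐ[R] Localization.AtPrime q :=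
      IsLocalization.liftAlgHom (M := p.primeCompl)
        (f := f₀) (fun s => hunit s.1 s.2) with hφdef
    have hcomm : (locAtPrimeToFractionField R R'' L' q).comp φ =
        j.comp (locAtPrimeToFractionField R S' K' p) := by
      apply AlgHom.coe_ringHom_injective
      apply IsLocalization.ringHom_ext p.primeCompl
      ext s
      simp only [RingHom.coe_comp, Function.comp_apply, AlgHom.toRingHom_eq_coe,
        RingHom.coe_coe, AlgHom.coe_comp]
      rw [hφdef]
      rw [show ((IsLocalization.liftAlgHom _ : Localization.AtPrime p →ₐ[R]
            Localization.AtPrime q)) (algebraMap S' (Localization.AtPrime p) s) = f₀ s from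
          IsLocalization.lift_eq _ s]
      rw [hf₀ s, hloc s]
      rw [show locAtPrimeToFractionField R S' K' p (algebraMap S' (Localization.AtPrime p) s)
          = algebraMap S' K' s from IsLocalization.lift_eq _ s]
      exact (hj s).symm
    refine ⟨F.map φ y, ?_⟩
    have h1 : F.map (locAtPrimeToFractionField R R'' L' q) (F.map φ y) =
        F.map ((locAtPrimeToFractionField R R'' L' q).comp φ) y := by
      rw [F.map_comp]; rfl
    rw [h1, hcomm, F.map_comp]
    show F.map j (F.map (locAtPrimeToFractionField R S' K' p) y) = F.map j x
    rw [hy]
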